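/- Proposition 1: Let X, Y, Z be random vectors in ℝ^{p₁}, ℝ^{p₂}, ℝ^{p₃} on a common probability space, where the law of Z is the multivariate Gaussian with mean 0 and positive definite covariance Σ_Z. Suppose g : ℝ^{p₃} → ℝ^{p₁×p₂} is measurable and differentiable, such that for every i, j the random variable g(Z)[i,j] is a version of the conditional expectation E[XᵢYⱼ | σ(Z)]; assume XᵢYⱼ, XᵢYⱼZ_k, each partial derivative (∂g_{ij}/∂z_k)(Z), and each z ↦ z_k·g_{ij}(z) are integrable. Define the generalized liquid association tensor Φ with entries Φ[i,j,k] = E[(∂g_{ij}/∂z_k)(Z)] and the tensor Δ with entries Δ[i,j,k] = E[XᵢYⱼZ_k]. Then Φ[i,j,k] = Σ_{k'=1}^{p₃} (Σ_Z^{-1})[k,k']·Δ[i,j,k'] for all i, j, k; that is, Φ = Δ ×₃ Σ_Z^{-1}. -/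

import Mathlib

open MeasureTheory ProbabilityTheory Real Matrix

/-- The density of the multivariate Gaussian distribution on `ℝ^d` with mean `0` and
(positive definite) covariance matrix `S`. -/
noncomputable def mvGaussianPDF {d : ℕ} (S : Matrix (Fin d) (Fin d) ℝ) (z : Fin d → ℝ) : ℝ :=
  (Real.sqrt ((2 * π) ^ d * S.det))⁻¹ * Real.exp (-(z ⬝ᵥ S⁻¹.mulVec z) / 2)

/-- The multivariate Gaussian measure on `ℝ^d` with mean `0` and covariance matrix `S`. -/
noncomputable def mvGaussian {d : ℕ} (S : Matrix (Fin d) (Fin d) ℝ) :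
    Measure (Fin d → ℝ) :=
  volume.withDensity (fun z => ENNReal.ofReal (mvGaussianPDF S z))

/-- If `h : ℝ^{n+1} → ℝ` has partial derivative `F` in direction `k` (in the sense of
derivatives along coordinate lines), and both `h` and `F` are Lebesgue integrable,
then `∫ F = 0`. -/
lemma integral_partial_eq_zero {n : ℕ} (k : Fin (n + 1))
    (h F : (Fin (n + 1) → ℝ) → ℝ)
    (hder : ∀ (w : Fin n → ℝ) (x : ℝ),
      HasDerivAt (fun t => h (k.insertNth t w)) (F (k.insertNth x w)) x)
    (hh : Integrable h) (hF : Integrable F) :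
    ∫ z, F z = 0 := by
  have mp := MeasureTheory.volume_preserving_piFinSuccAbove (fun _ : Fin (n + 1) => ℝ) k
  set e := MeasurableEquiv.piFinSuccAbove (fun _ : Fin (n + 1) => ℝ) k with he
  have hsymm : ∀ (x : ℝ) (w : Fin n → ℝ), e.symm (x, w) = k.insertNth x w := fun x w => rfl
  have mps := MeasurePreserving.symm e mp
  have hFe : Integrable (fun p => F (e.symm p)) ((volume : Measure ℝ).prod volume) :=
    (mps.integrable_comp_emb e.symm.measurableEmbedding).mpr hF
  have hhe : Integrable (fun p => h (e.symm p)) ((volume : Measure ℝ).prod volume) :=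
    (mps.integrable_comp_emb e.symm.measurableEmbedding).mpr hh
  have h1 : ∫ p, F (e.symm p) ∂((volume : Measure ℝ).prod volume) = ∫ z, F z :=
    mps.integral_comp e.symm.measurableEmbedding F
  rw [← h1, MeasureTheory.integral_prod_symm _ hFe]
  have key : ∀ᵐ w ∂(volume : Measure (Fin n → ℝ)),
      (∫ x, F (e.symm (x, w))) = 0 := by
    filter_upwards [hFe.prod_left_ae, hhe.prod_left_ae] with w hFw hhw
    simp only [hsymm] at hFw hhw ⊢
    exact integral_eq_zero_of_hasDerivAt_of_integrable (hder w) hFw hhw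
  rw [integral_congr_ae key, integral_zero]

lemma continuous_mvGaussianPDF {d : ℕ} (S : Matrix (Fin d) (Fin d) ℝ) :
    Continuous (mvGaussianPDF S) := by
  unfold mvGaussianPDF
  have h1 : Continuous fun z : Fin d → ℝ => z ⬝ᵥ S⁻¹.mulVec z := by
    simp only [dotProduct, Matrix.mulVec]
    exact continuous_finset_sum _ fun i _ => (continuous_apply i).mul
      (continuous_finset_sum _ fun j _ => continuous_const.mul (continuous_apply j))
  exact continuous_const.mul (Real.continuous_exp.comp (h1.neg.div_const 2))

lemma mvGaussianPDF_nonneg {d : ℕ} (S : Matrix (Fin d) (Fin d) ℝ) (z : Fin d → ℝ) :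
    0 ≤ mvGaussianPDF S z := by
  unfold mvGaussianPDF
  positivity

lemma integrable_mvGaussian_iff {d : ℕ} (S : Matrix (Fin d) (Fin d) ℝ)
    {φ : (Fin d → ℝ) → ℝ} :
    Integrable φ (mvGaussian S) ↔
      Integrable (fun z => φ z * mvGaussianPDF S z) volume := by
  unfold mvGaussian
  have hmeas : Measurable fun z : Fin d → ℝ => ENNReal.ofReal (mvGaussianPDF S z) :=
    (continuous_mvGaussianPDF S).measurable.ennreal_ofReal
  rw [integrable_withDensity_iff hmeas (ae_of_all _ fun z => ENNReal.ofReal_lt_top)]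
  simp_rw [ENNReal.toReal_ofReal (mvGaussianPDF_nonneg S _)]

lemma integral_mvGaussian {d : ℕ} (S : Matrix (Fin d) (Fin d) ℝ)
    (φ : (Fin d → ℝ) → ℝ) :
    ∫ z, φ z ∂(mvGaussian S) = ∫ z, φ z * mvGaussianPDF S z := by
  unfold mvGaussian
  have h1 : (fun z : Fin d → ℝ => ENNReal.ofReal (mvGaussianPDF S z))
      = fun z : Fin d → ℝ =>
        (((fun z : Fin d → ℝ => (mvGaussianPDF S z).toNNReal) z : NNReal) : ENNReal) := rfl
  rw [h1, integral_withDensity_eq_integral_smul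
    ((continuous_mvGaussianPDF S).measurable.real_toNNReal)]
  congr 1
  funext z
  simp [NNReal.smul_def, Real.coe_toNNReal _ (mvGaussianPDF_nonneg S z), mul_comm]

lemma hasDerivAt_quadForm_line {d : ℕ} (A : Matrix (Fin d) (Fin d) ℝ)
    (hA : ∀ i j, A i j = A j i) (v : ℝ → Fin d → ℝ) (c : Fin d → ℝ)
    (hv : ∀ (j : Fin d) (x : ℝ), HasDerivAt (fun t => v t j) (c j) x) (x : ℝ) :
    HasDerivAt (fun t => v t ⬝ᵥ A.mulVec (v t)) (2 * (c ⬝ᵥ A.mulVec (v x))) x := by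
  have main : HasDerivAt (fun t => ∑ i, v t i * ∑ j, A i j * v t j)
      (∑ i, (c i * ∑ j, A i j * v x j + v x i * ∑ j, A i j * c j)) x := by
    apply HasDerivAt.fun_sum
    intro i _
    exact (hv i x).mul (HasDerivAt.fun_sum fun j _ => (hv j x).const_mul (A i j))
  have e1 : (fun t => v t ⬝ᵥ A.mulVec (v t)) = fun t => ∑ i, v t i * ∑ j, A i j * v t j := by
    funext t; simp [dotProduct, Matrix.mulVec]
  rw [e1]
  convert main using 1
  have e2 : ∑ i, v x i * ∑ j, A i j * c j = ∑ i, c i * ∑ j, A i j * v x j := by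
    simp_rw [Finset.mul_sum]
    rw [Finset.sum_comm]
    refine Finset.sum_congr rfl fun i _ => Finset.sum_congr rfl fun j _ => ?_
    rw [hA j i]; ring
  rw [Finset.sum_add_distrib, e2]
  simp only [dotProduct, Matrix.mulVec]
  ring

lemma hasDerivAt_mvGaussianPDF_line {d : ℕ} (S : Matrix (Fin d) (Fin d) ℝ)
    (hA : ∀ i j, S⁻¹ i j = S⁻¹ j i) (v : ℝ → Fin d → ℝ) (c : Fin d → ℝ)
    (hv : ∀ (j : Fin d) (x : ℝ), HasDerivAt (fun t => v t j) (c j) x) (x : ℝ) :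
    HasDerivAt (fun t => mvGaussianPDF S (v t))
      (-(c ⬝ᵥ S⁻¹.mulVec (v x)) * mvGaussianPDF S (v x)) x := by
  have hq := hasDerivAt_quadForm_line S⁻¹ hA v c hv x
  have h1 : HasDerivAt (fun t => -(v t ⬝ᵥ S⁻¹.mulVec (v t)) / 2)
      (-(2 * (c ⬝ᵥ S⁻¹.mulVec (v x))) / 2) x := hq.neg.div_const 2
  have h2 := (h1.exp).const_mul ((Real.sqrt ((2 * π) ^ d * S.det))⁻¹)
  convert h2 using 1
  · rfl
  · rfl
  · unfold mvGaussianPDF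
    ring
  unfold mvGaussianPDF
  ring

/-- Proposition 1: if `Z ∼ N(0, Σ_Z)` with `Σ_Z` positive definite, and `g(Z)[i,j]` is a
version of `E[XᵢYⱼ | σ(Z)]` for a differentiable `g`, then the generalized liquid association
tensor `Φ[i,j,k] = E[∂g_ij/∂z_k (Z)]` satisfies `Φ = Δ ×₃ Σ_Z⁻¹`, where
`Δ[i,j,k] = E[XᵢYⱼZ_k]`. -/
theorem gla_eq_mode3_product {Ω : Type*} [MeasurableSpace Ω]
    (P : Measure Ω) [IsProbabilityMeasure P] {p₁ p₂ p₃ : ℕ}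
    (X : Ω → Fin p₁ → ℝ) (Y : Ω → Fin p₂ → ℝ) (Z : Ω → Fin p₃ → ℝ)
    (hX : Measurable X) (hY : Measurable Y) (hZ : Measurable Z)
    (SZ : Matrix (Fin p₃) (Fin p₃) ℝ) (hSZ : SZ.PosDef)
    (hlawZ : P.map Z = mvGaussian SZ)
    (g : (Fin p₃ → ℝ) → Matrix (Fin p₁) (Fin p₂) ℝ)
    (hgm : ∀ i j, Measurable (fun z => g z i j))
    (hgd : ∀ i j, Differentiable ℝ (fun z => g z i j))
    (hcond : ∀ i j, (fun ω => g (Z ω) i j) =ᵐ[P]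
      P[fun ω => X ω i * Y ω j | MeasurableSpace.comap Z inferInstance])
    (hXY : ∀ i j, Integrable (fun ω => X ω i * Y ω j) P)
    (hXYZ : ∀ i j k, Integrable (fun ω => X ω i * Y ω j * Z ω k) P)
    (hpart : ∀ i j k,
      Integrable (fun ω => fderiv ℝ (fun z => g z i j) (Z ω) (Pi.single k 1)) P)
    (hzg : ∀ i j k, Integrable (fun z => z k * g z i j) (P.map Z))
    (Φ : Fin p₁ → Fin p₂ → Fin p₃ → ℝ)
    (hΦ : ∀ i j k, Φ i j k = ∫ ω, fderiv ℝ (fun z => g z i j) (Z ω) (Pi.single k 1) ∂P)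
    (Δ : Fin p₁ → Fin p₂ → Fin p₃ → ℝ)
    (hΔ : ∀ i j k, Δ i j k = ∫ ω, X ω i * Y ω j * Z ω k ∂P) :
    ∀ i j k, Φ i j k = ∑ k' : Fin p₃, SZ⁻¹ k k' * Δ i j k' := by
  intro i j k
  obtain ⟨n, rfl⟩ : ∃ n, p₃ = n + 1 := ⟨p₃ - 1, (Nat.succ_pred_eq_of_pos k.pos).symm⟩
  have hm : MeasurableSpace.comap Z inferInstance ≤ ‹MeasurableSpace Ω› := hZ.comap_le
  -- symmetry of SZ⁻¹
  have hH : (SZ⁻¹).IsHermitian := hSZ.1.inv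
  have hsymm : ∀ a b, SZ⁻¹ a b = SZ⁻¹ b a := by
    intro a b
    conv_lhs => rw [← hH]
    simp [Matrix.conjTranspose_apply]
  -- measurability of the partial derivative
  have hAmeas : Measurable fun z : Fin (n + 1) → ℝ =>
      fderiv ℝ (fun z => g z i j) z (Pi.single k 1) :=
    measurable_fderiv_apply_const ℝ _ _
  -- conversion between integrability/integrals over `Ω`, `P.map Z`, and Lebesgue measure
  have convInt : ∀ {φ : (Fin (n + 1) → ℝ) → ℝ}, Measurable φ →
      (Integrable (fun ω => φ (Z ω)) P ↔
        Integrable (fun z => φ z * mvGaussianPDF SZ z) volume) := by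
    intro φ hφ
    rw [← integrable_mvGaussian_iff, ← hlawZ]
    exact (integrable_map_measure hφ.aestronglyMeasurable hZ.aemeasurable).symm
  have convIntegral : ∀ {φ : (Fin (n + 1) → ℝ) → ℝ}, Measurable φ →
      ∫ ω, φ (Z ω) ∂P = ∫ z, φ z * mvGaussianPDF SZ z := by
    intro φ hφ
    rw [← integral_mvGaussian, ← hlawZ]
    exact (integral_map hZ.aemeasurable hφ.aestronglyMeasurable).symm
  -- integrabilities at the Lebesgue level
  have hgZint : Integrable (fun ω => g (Z ω) i j) P := integrable_condExp.congr (hcond i j).symm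
  have hfρ : Integrable (fun z => g z i j * mvGaussianPDF SZ z) volume :=
    (convInt (hgm i j)).1 hgZint
  have hAρ : Integrable (fun z =>
      fderiv ℝ (fun z => g z i j) z (Pi.single k 1) * mvGaussianPDF SZ z) volume :=
    (convInt hAmeas).1 (hpart i j k)
  have hzfρ : ∀ k', Integrable
      (fun z => z k' * g z i j * mvGaussianPDF SZ z) volume := by
    intro k'
    have h1 : Integrable (fun z => z k' * g z i j) (P.map Z) := hzg i j k'
    rw [hlawZ] at h1
    exact (integrable_mvGaussian_iff SZ).1 h1
  have hsum_int : Integrable (fun z =>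
      ∑ k', SZ⁻¹ k k' * (z k' * g z i j * mvGaussianPDF SZ z)) volume :=
    integrable_finset_sum _ fun k' _ => (hzfρ k').const_mul _
  -- coordinate-line derivatives of `insertNth`
  have hv : ∀ (w : Fin n → ℝ) (j' : Fin (n + 1)) (x : ℝ),
      HasDerivAt (fun t => (k.insertNth t w : Fin (n + 1) → ℝ) j')
        ((Pi.single k 1 : Fin (n + 1) → ℝ) j') x := by
    intro w j' x
    refine Fin.succAboveCases (α := fun j' => HasDerivAt
      (fun t => (k.insertNth t w : Fin (n + 1) → ℝ) j')
      ((Pi.single k 1 : Fin (n + 1) → ℝ) j') x) k ?_ ?_ j'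
    · simp only [Fin.insertNth_apply_same, Pi.single_eq_same]
      exact hasDerivAt_id x
    · intro m
      simp only [Fin.insertNth_apply_succAbove, Pi.single_eq_of_ne (Fin.succAbove_ne k m)]
      exact hasDerivAt_const x (w m)
  -- the algebraic identity used to rewrite the derivative of the density factor
  have algebra : ∀ u : Fin (n + 1) → ℝ,
      g u i j * (-(Pi.single k 1 ⬝ᵥ SZ⁻¹.mulVec u) * mvGaussianPDF SZ u)
        = -∑ k', SZ⁻¹ k k' * (u k' * g u i j * mvGaussianPDF SZ u) := by
    intro u
    have h0 : Pi.single k (1 : ℝ) ⬝ᵥ SZ⁻¹.mulVec u = ∑ k', SZ⁻¹ k k' * u k' := by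
      rw [single_dotProduct, one_mul]
      simp [Matrix.mulVec, dotProduct]
    rw [h0, neg_mul, mul_neg, neg_inj, Finset.sum_mul, Finset.mul_sum]
    exact Finset.sum_congr rfl fun k' _ => by ring
  -- the key derivative computation
  have hder : ∀ (w : Fin n → ℝ) (x : ℝ),
      HasDerivAt (fun t => g (k.insertNth t w) i j * mvGaussianPDF SZ (k.insertNth t w))
        (fderiv ℝ (fun z => g z i j) (k.insertNth x w) (Pi.single k 1)
            * mvGaussianPDF SZ (k.insertNth x w)
          - ∑ k', SZ⁻¹ k k' * ((k.insertNth x w : Fin (n + 1) → ℝ) k' * g (k.insertNth x w) i j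
            * mvGaussianPDF SZ (k.insertNth x w))) x := by
    intro w x
    have hvp : HasDerivAt (fun t => (k.insertNth t w : Fin (n + 1) → ℝ))
        ((Pi.single k 1 : Fin (n + 1) → ℝ)) x :=
      hasDerivAt_pi (φ := fun t => (k.insertNth t w : Fin (n + 1) → ℝ))
        (φ' := (Pi.single k 1 : Fin (n + 1) → ℝ)) (x := x) |>.2 fun j' => hv w j' x
    have hfd : HasDerivAt (fun t => g (k.insertNth t w) i j)
        (fderiv ℝ (fun z => g z i j) (k.insertNth x w) (Pi.single k 1)) x :=
      by have := (((hgd i j) (k.insertNth x w)).hasFDerivAt).comp_hasDerivAt x hvp; exact this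
    have hrd := hasDerivAt_mvGaussianPDF_line SZ hsymm (fun t => k.insertNth t w)
      (Pi.single k 1) (fun j' x' => hv w j' x') x
    have hmul := hfd.mul hrd
    rw [sub_eq_add_neg, ← algebra (k.insertNth x w)]
    exact hmul
  -- Stein's identity at the Lebesgue level
  have hzero : ∫ z, (fderiv ℝ (fun z => g z i j) z (Pi.single k 1) * mvGaussianPDF SZ z
      - ∑ k', SZ⁻¹ k k' * (z k' * g z i j * mvGaussianPDF SZ z)) = 0 :=
    integral_partial_eq_zero k (fun z => g z i j * mvGaussianPDF SZ z)
      (fun z => fderiv ℝ (fun z => g z i j) z (Pi.single k 1) * mvGaussianPDF SZ z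
        - ∑ k', SZ⁻¹ k k' * (z k' * g z i j * mvGaussianPDF SZ z))
      hder hfρ (hAρ.sub hsum_int)
  have hsplit : ∫ z, fderiv ℝ (fun z => g z i j) z (Pi.single k 1) * mvGaussianPDF SZ z
      = ∑ k', SZ⁻¹ k k' * ∫ z, z k' * g z i j * mvGaussianPDF SZ z := by
    have h2 : (∫ z, fderiv ℝ (fun z => g z i j) z (Pi.single k 1) * mvGaussianPDF SZ z)
        - ∫ z, (∑ k', SZ⁻¹ k k' * (z k' * g z i j * mvGaussianPDF SZ z)) = 0 := by
      rw [← integral_sub hAρ hsum_int]; exact hzero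
    have h3 : ∫ z, (∑ k', SZ⁻¹ k k' * (z k' * g z i j * mvGaussianPDF SZ z))
        = ∑ k', ∫ z, SZ⁻¹ k k' * (z k' * g z i j * mvGaussianPDF SZ z) :=
      integral_finset_sum _ fun k' _ => (hzfρ k').const_mul _
    rw [sub_eq_zero] at h2
    rw [h2, h3]
    exact Finset.sum_congr rfl fun k' _ => integral_const_mul _ _
  -- identify Δ with the Lebesgue integrals, via conditional expectation
  have hΔeq : ∀ k', Δ i j k' = ∫ z, z k' * g z i j * mvGaussianPDF SZ z := by
    intro k'
    have hZcm : @Measurable Ω (Fin (n + 1) → ℝ) (MeasurableSpace.comap Z inferInstance) _ Z :=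
      Measurable.of_comap_le le_rfl
    have hZk' : StronglyMeasurable[MeasurableSpace.comap Z inferInstance]
        (fun ω => Z ω k') :=
      (Measurable.comp (measurable_pi_apply k') hZcm).stronglyMeasurable
    have heq1 : ((fun ω => Z ω k') * fun ω => X ω i * Y ω j)
        = fun ω => X ω i * Y ω j * Z ω k' := by
      funext ω; simp only [Pi.mul_apply]; ring
    have hmul : Integrable ((fun ω => Z ω k') * fun ω => X ω i * Y ω j) P := by
      rw [heq1]; exact hXYZ i j k'
    have hpull := condExp_mul_of_stronglyMeasurable_left hZk' hmul (hXY i j)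
    calc Δ i j k' = ∫ ω, X ω i * Y ω j * Z ω k' ∂P := hΔ i j k'
      _ = ∫ ω, ((fun ω => Z ω k') * fun ω => X ω i * Y ω j) ω ∂P := by rw [heq1]
      _ = ∫ ω, (P[((fun ω => Z ω k') * fun ω => X ω i * Y ω j)
            | MeasurableSpace.comap Z inferInstance]) ω ∂P := (integral_condExp hm).symm
      _ = ∫ ω, Z ω k' * (P[fun ω => X ω i * Y ω j
            | MeasurableSpace.comap Z inferInstance]) ω ∂P := by
          refine integral_congr_ae (hpull.mono fun ω hω => ?_)
          rw [hω]; simp only [Pi.mul_apply]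
      _ = ∫ ω, Z ω k' * g (Z ω) i j ∂P := by
          refine integral_congr_ae ?_
          filter_upwards [hcond i j] with ω hω
          rw [← hω]
      _ = ∫ z, z k' * g z i j * mvGaussianPDF SZ z :=
          convIntegral ((measurable_pi_apply k').mul (hgm i j))
  have hΦeq : Φ i j k = ∫ z,
      fderiv ℝ (fun z => g z i j) z (Pi.single k 1) * mvGaussianPDF SZ z := by
    rw [hΦ i j k]; exact convIntegral hAmeas
  rw [hΦeq, hsplit]
  exact Finset.sum_congr rfl fun k' _ => by rw [hΔeq k']
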